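/- Let f be a bounded (n,2n)-affine permutation. Then Φ maps L(f) into L(Rf), Φ∘Φ is the identity on L(f), hence Φ is a bijection from L(f) onto L(Rf); in particular ℓ(f) = ℓ(Rf). -/

import Mathlib

/-- A `(k,N)`-affine permutation: a bijection `f : ℤ → ℤ` with `f(i+N) = f(i)+N` and
`∑_{i=1}^{N} (f(i)-i) = kN`. -/
def IsAffinePerm (k N : ℕ) (f : ℤ → ℤ) : Prop :=
  Function.Bijective f ∧ (∀ i : ℤ, f (i + N) = f i + N) ∧
    (∑ i ∈ Finset.Icc (1 : ℤ) (N : ℤ), (f i - i)) = k * N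

/-- Boundedness: `i ≤ f(i) ≤ i + N` for all `i`. -/
def IsBoundedAP (N : ℕ) (f : ℤ → ℤ) : Prop :=
  ∀ i : ℤ, i ≤ f i ∧ f i ≤ i + N

/-- The map `R`, `(Rf)(i) = 2n - f(-i-1) - 1`. -/
def Rperm (n : ℕ) (f : ℤ → ℤ) : ℤ → ℤ := fun i => 2*n - f (-i - 1) - 1

/-- The inversion set `L(f) = {(x,y) ∈ {0,…,2n-1} × ℤ : x < y ∧ f(x) > f(y)}`. -/
def Lset (n : ℕ) (f : ℤ → ℤ) : Set (ℤ × ℤ) :=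
  {p | 0 ≤ p.1 ∧ p.1 ≤ 2*n - 1 ∧ p.1 < p.2 ∧ f p.2 < f p.1}

/-- The map `Φ`, sending `(x,y)` (with `0 ≤ x ≤ 2n-1`, `x < y`) to the unique pair
`(x', y') = (2n-y-1+2nm, 2n-x-1+2nm)` with `m ∈ ℤ` and `x' ∈ {0,…,2n-1}`. -/
def PhiMap (n : ℕ) (p : ℤ × ℤ) : ℤ × ℤ :=
  ((2*n - p.2 - 1) % (2*n),
    2*n - p.1 - 1 + ((2*n - p.2 - 1) % (2*n) - (2*n - p.2 - 1)))

lemma per_mul {n : ℕ} {f : ℤ → ℤ} (hper : ∀ i : ℤ, f (i + 2*n) = f i + 2*n) :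
    ∀ (m i : ℤ), f (i + 2*n*m) = f i + 2*n*m := by
  intro m
  induction m using Int.induction_on with
  | zero => simp
  | succ k ih =>
      intro i
      have h1 : i + 2*(n:ℤ)*(k+1) = (i + 2*n*k) + 2*n := by ring
      rw [h1, hper, ih i]; ring
  | pred k ih =>
      intro i
      have h2 := hper (i + 2*(n:ℤ)*(-k-1))
      have h1 : i + 2*(n:ℤ)*(-k-1) + 2*n = i + 2*n*(-k) := by ring
      rw [h1, ih i] at h2
      linarith

lemma phi_key (n : ℕ) (hn : 0 < n) (f : ℤ → ℤ)
    (hper : ∀ i : ℤ, f (i + 2*n) = f i + 2*n) :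
    Set.MapsTo (PhiMap n) (Lset n f) (Lset n (Rperm n f)) ∧
    ∀ p ∈ Lset n f, PhiMap n (PhiMap n p) = p := by
  have hT : (0:ℤ) < 2*n := by positivity
  constructor
  · rintro ⟨x, y⟩ ⟨hx0, hx1, hxy, hfy⟩
    replace hx0 : (0:ℤ) ≤ x := hx0
    replace hx1 : x ≤ 2*(n:ℤ) - 1 := hx1
    replace hxy : x < y := hxy
    replace hfy : f y < f x := hfy
    set a : ℤ := 2*(n:ℤ) - y - 1 with ha
    set q : ℤ := -(a / (2*n)) with hq
    have hmod : a % (2*(n:ℤ)) = a + 2*n*q := by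
      rw [hq, Int.emod_def]; ring
    have hx'0 : 0 ≤ a % (2*(n:ℤ)) := Int.emod_nonneg a (by omega)
    have hx'1 : a % (2*(n:ℤ)) < 2*n := Int.emod_lt_of_pos a hT
    have h1 : f (-(a % (2*(n:ℤ))) - 1) = f y + 2*n*(-1-q) := by
      have harg : -(a % (2*(n:ℤ))) - 1 = y + 2*n*(-1-q) := by rw [hmod, ha]; ring
      rw [harg, per_mul hper]
    have h2 : f (-(2*(n:ℤ) - x - 1 + (a % (2*(n:ℤ)) - a)) - 1) = f x + 2*n*(-1-q) := by
      have harg : -(2*(n:ℤ) - x - 1 + (a % (2*(n:ℤ)) - a)) - 1 = x + 2*n*(-1-q) := by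
        rw [hmod]; ring
      rw [harg, per_mul hper]
    refine ⟨hx'0, ?_, ?_, ?_⟩
    · show a % (2*(n:ℤ)) ≤ 2*n - 1
      omega
    · show a % (2*(n:ℤ)) < 2*n - x - 1 + (a % (2*(n:ℤ)) - a)
      rw [ha]; omega
    · show Rperm n f (2*(n:ℤ) - x - 1 + (a % (2*(n:ℤ)) - a)) < Rperm n f (a % (2*(n:ℤ)))
      simp only [Rperm]
      rw [h1, h2]
      omega
  · rintro ⟨x, y⟩ ⟨hx0, hx1, hxy, hfy⟩
    replace hx0 : (0:ℤ) ≤ x := hx0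
    replace hx1 : x ≤ 2*(n:ℤ) - 1 := hx1
    set a : ℤ := 2*(n:ℤ) - y - 1 with ha
    set q : ℤ := -(a / (2*n)) with hq
    have hmod : a % (2*(n:ℤ)) = a + 2*n*q := by
      rw [hq, Int.emod_def]; ring
    have hy' : (PhiMap n (x, y)).2 = 2*(n:ℤ) - x - 1 + 2*n*q := by
      simp only [PhiMap]; rw [hmod]; ring
    have hx' : (PhiMap n (x, y)).1 = a + 2*n*q := by
      simp only [PhiMap]; rw [hmod]
    have ha' : 2*(n:ℤ) - (PhiMap n (x, y)).2 - 1 = x - 2*n*q := by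
      rw [hy']; ring
    have hmod2 : (2*(n:ℤ) - (PhiMap n (x, y)).2 - 1) % (2*n) = x := by
      rw [ha']
      have h5 : x - 2*(n:ℤ)*q = x + 2*n*(-q) := by ring
      rw [h5, Int.add_mul_emod_self_left, Int.emod_eq_of_lt hx0 (by omega)]
    show PhiMap n (PhiMap n (x, y)) = (x, y)
    have : PhiMap n (PhiMap n (x, y)) =
        ((2*(n:ℤ) - (PhiMap n (x, y)).2 - 1) % (2*n),
         2*n - (PhiMap n (x, y)).1 - 1 +
           ((2*(n:ℤ) - (PhiMap n (x, y)).2 - 1) % (2*n) - (2*n - (PhiMap n (x, y)).2 - 1))) := rfl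
    rw [this, hmod2, ha', hx']
    refine Prod.ext rfl ?_
    show 2*(n:ℤ) - (a + 2*n*q) - 1 + (x - (x - 2*n*q)) = y
    rw [ha]; ring

theorem stmt_12 (n : ℕ) (hn : 0 < n) (f : ℤ → ℤ)
    (hf : IsAffinePerm n (2*n) f) (hb : IsBoundedAP (2*n) f) :
    Set.MapsTo (PhiMap n) (Lset n f) (Lset n (Rperm n f))
    ∧ (∀ p ∈ Lset n f, PhiMap n (PhiMap n p) = p)
    ∧ Set.BijOn (PhiMap n) (Lset n f) (Lset n (Rperm n f))
    ∧ (Lset n f).ncard = (Lset n (Rperm n f)).ncard := by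
  have hper : ∀ i : ℤ, f (i + 2*n) = f i + 2*n := by
    intro i
    have := hf.2.1 i
    push_cast at this
    exact this
  have hRper : ∀ i : ℤ, Rperm n f (i + 2*n) = Rperm n f i + 2*n := by
    intro i
    simp only [Rperm]
    have harg : -(i + 2*(n:ℤ)*1) - 1 = (-i - 1) + 2*n*(-1) := by ring
    have h := per_mul hper (-1) (-i - 1)
    have h2 : -(i + 2*(n:ℤ)) - 1 = (-i - 1) + 2*n*(-1) := by ring
    rw [h2, h]; ring
  have hRR : Rperm n (Rperm n f) = f := by
    funext i
    simp only [Rperm]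
    have h : (-(-i - 1) - 1 : ℤ) = i := by ring
    rw [h]; ring
  obtain ⟨hm1, hinv1⟩ := phi_key n hn f hper
  obtain ⟨hm2, hinv2⟩ := phi_key n hn (Rperm n f) hRper
  rw [hRR] at hm2
  have hbij : Set.BijOn (PhiMap n) (Lset n f) (Lset n (Rperm n f)) := by
    refine ⟨hm1, ?_, ?_⟩
    · intro p hp q hq hpq
      rw [← hinv1 p hp, ← hinv1 q hq, hpq]
    · intro q hq
      exact ⟨PhiMap n q, hm2 hq, hinv2 q hq⟩
  refine ⟨hm1, hinv1, hbij, ?_⟩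
  rw [← hbij.image_eq, Set.ncard_image_of_injOn hbij.injOn]
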